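/- Any sequence {z_n}_{n≥2} in the open unit disk 𝔻 with |z_n| = 1 - 1/n! for all n ≥ 2 is a thin Blaschke sequence, i.e. lim_{k→∞} ∏_{j : j ≠ k} d(z_k, z_j) = 1. -/

import Mathlib

open Complex Filter Metric

/-- The pseudohyperbolic distance `d(z,w) = |z - w| / |1 - conj z * w|` on the unit disk. -/
noncomputable def pd (z w : ℂ) : ℝ :=
  ‖z - w‖ / ‖1 - (starRingEnd ℂ) z * w‖


lemma pd_nonneg (z w : ℂ) : 0 ≤ pd z w :=
  div_nonneg (norm_nonneg _) (norm_nonneg _)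

lemma pd_symm (z w : ℂ) : pd z w = pd w z := by
  unfold pd
  congr 1
  · rw [← neg_sub w z, norm_neg]
  · rw [← Complex.norm_conj (1 - (starRingEnd ℂ) w * z)]
    congr 1
    simp [map_sub, map_mul]
    ring

lemma pd_le_one {z w : ℂ} (hz : ‖z‖ ≤ 1) (hw : ‖w‖ ≤ 1) :
    pd z w ≤ 1 := by
  apply div_le_one_of_le₀ _ (norm_nonneg _)
  have h1 : Complex.normSq (z - w) ≤ Complex.normSq (1 - (starRingEnd ℂ) z * w) := by
    have hz2 : z.re ^ 2 + z.im ^ 2 ≤ 1 := by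
      have := Complex.sq_norm z
      nlinarith [Complex.normSq_apply z, norm_nonneg z]
    have hw2 : w.re ^ 2 + w.im ^ 2 ≤ 1 := by
      have := Complex.sq_norm w
      nlinarith [Complex.normSq_apply w, norm_nonneg w]
    simp only [Complex.normSq_apply, Complex.sub_re, Complex.sub_im, Complex.one_re,
      Complex.one_im, Complex.mul_re, Complex.mul_im, Complex.conj_re, Complex.conj_im]
    nlinarith [sq_nonneg (z.re*w.im - z.im*w.re), sq_nonneg (z.re*w.re + z.im*w.im),
      mul_nonneg (sub_nonneg.2 hz2) (sub_nonneg.2 hw2)]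
  calc ‖z - w‖ = Real.sqrt (Complex.normSq (z - w)) := (by rw [Complex.norm_def])
    _ ≤ Real.sqrt (Complex.normSq (1 - (starRingEnd ℂ) z * w)) := Real.sqrt_le_sqrt h1
    _ = _ := (by rw [Complex.norm_def])


lemma pd_lower {a b : ℝ} {z w : ℂ} (ha : 0 < a) (ha1 : a ≤ 1) (hb : 0 < b) (hba : b ≤ a)
    (hza : ‖z‖ = 1 - a) (hwa : ‖w‖ = 1 - b) :
    1 - 2 * b / a ≤ pd z w := by
  set r : ℝ := 1 - a with hr
  set s : ℝ := 1 - b with hs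
  have hr0 : 0 ≤ r := by simp [hr]; linarith
  have hrs : r ≤ s := by simp [hr, hs]; linarith
  have hs1 : s < 1 := by simp [hs]; linarith
  -- denominator bound
  have habs : ‖(starRingEnd ℂ) z * w‖ = r * s := by
    rw [norm_mul, Complex.norm_conj, hza, hwa]
  have hD : 1 - r * s ≤ ‖1 - (starRingEnd ℂ) z * w‖ := by
    calc 1 - r * s = ‖(1:ℂ)‖ - ‖(starRingEnd ℂ) z * w‖ := by
          rw [habs, norm_one]
      _ ≤ _ := by
          have := norm_sub_norm_le (1:ℂ) ((starRingEnd ℂ) z * w)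
          simpa using this
  have hrs1 : 0 < 1 - r * s := by nlinarith
  have hDpos : 0 < ‖1 - (starRingEnd ℂ) z * w‖ := lt_of_lt_of_le hrs1 hD
  -- step 1 : (s - r)/(1 - r*s) ≤ pd z w
  have step1 : (s - r) / (1 - r * s) ≤ pd z w := by
    rw [pd, div_le_div_iff₀ hrs1 hDpos]
    -- squared inequality
    set t : ℝ := ((starRingEnd ℂ) z * w).re with htdef
    have ht : t ≤ r * s := by
      rw [← habs]; exact Complex.re_le_norm _
    have hnum : (‖z - w‖) ^ 2 = r ^ 2 + s ^ 2 - 2 * t := by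
      rw [Complex.sq_norm, Complex.normSq_sub]
      have h1 : (z * (starRingEnd ℂ) w).re = t := by
        rw [htdef, ← Complex.conj_re (z * (starRingEnd ℂ) w)]
        congr 1
        simp [map_mul]
      rw [h1, ← Complex.sq_norm, ← Complex.sq_norm, hza, hwa]
    have hden : (‖1 - (starRingEnd ℂ) z * w‖) ^ 2
        = 1 + r ^ 2 * s ^ 2 - 2 * t := by
      rw [Complex.sq_norm, Complex.normSq_sub]
      have h1 : (1 * (starRingEnd ℂ) ((starRingEnd ℂ) z * w)).re = t := by
        rw [one_mul, htdef, Complex.conj_re]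
      rw [h1, Complex.normSq_one, map_mul, Complex.normSq_conj,
        ← Complex.sq_norm, ← Complex.sq_norm, hza, hwa]
    have hsq : ((s - r) * ‖1 - (starRingEnd ℂ) z * w‖) ^ 2
        ≤ (‖z - w‖ * (1 - r * s)) ^ 2 := by
      have h2 : 0 ≤ (1 - r * s) ^ 2 - (s - r) ^ 2 := by
        nlinarith [mul_nonneg (mul_nonneg (by linarith : (0:ℝ) ≤ 1 + r) (by linarith : (0:ℝ) ≤ 1 - s)) (mul_nonneg (by linarith : (0:ℝ) ≤ 1 - r) (by linarith : (0:ℝ) ≤ 1 + s))]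
      have h1 : 0 ≤ r * s - t := by linarith
      calc ((s - r) * ‖1 - (starRingEnd ℂ) z * w‖) ^ 2
          = (s - r) ^ 2 * (1 + r ^ 2 * s ^ 2 - 2 * t) := by rw [mul_pow, hden]
        _ ≤ (r ^ 2 + s ^ 2 - 2 * t) * (1 - r * s) ^ 2 := by nlinarith [mul_nonneg h1 h2]
        _ = (‖z - w‖ * (1 - r * s)) ^ 2 := by rw [mul_pow, hnum]
    have hX : 0 ≤ (s - r) * ‖1 - (starRingEnd ℂ) z * w‖ :=
      mul_nonneg (by linarith) (norm_nonneg _)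
    have hY : 0 ≤ ‖z - w‖ * (1 - r * s) :=
      mul_nonneg (norm_nonneg _) (by linarith)
    nlinarith [hsq, hX, hY]
  -- step 2 : arithmetic
  have step2 : 1 - 2 * b / a ≤ (s - r) / (1 - r * s) := by
    have h1 : s - r = a - b := by simp [hr, hs]
    have h2 : 1 - r * s = a + b - a * b := by simp [hr, hs]; ring
    rw [h1, h2]
    have hd : 0 < a + b - a * b := by nlinarith
    have he : 1 - 2 * b / a = (a - 2 * b) / a := by field_simp
    rw [he, div_le_div_iff₀ ha hd]
    nlinarith [mul_nonneg hb.le (mul_nonneg hb.le (by linarith : (0:ℝ) ≤ 1 - a)), mul_pos hb (mul_pos ha ha)]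
  linarith

-- factorial growth
lemma fact_aux (m : ℕ) : ∀ i : ℕ, (m + i + 3) * 2 ^ i * Nat.factorial (m + 2)
    ≤ Nat.factorial (m + i + 3) := by
  intro i
  induction i with
  | zero => simp [Nat.factorial_succ, show m + 0 + 3 = (m+2)+1 by ring]
  | succ n ih =>
      have h2 : 2 * 2 ^ n * Nat.factorial (m + 2) ≤ Nat.factorial (m + n + 3) := by
        calc 2 * 2 ^ n * Nat.factorial (m + 2)
            ≤ (m + n + 3) * 2 ^ n * Nat.factorial (m + 2) := by
              apply Nat.mul_le_mul_right; apply Nat.mul_le_mul_right; omega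
          _ ≤ Nat.factorial (m + n + 3) := ih
      calc (m + (n+1) + 3) * 2 ^ (n+1) * Nat.factorial (m + 2)
          = (m + n + 4) * (2 * 2 ^ n * Nat.factorial (m + 2)) := by ring_nf
        _ ≤ (m + n + 4) * Nat.factorial (m + n + 3) := Nat.mul_le_mul_left _ h2
        _ = Nat.factorial (m + n + 4) := (Nat.factorial_succ (m+n+3)).symm

-- real version
lemma real_bound (k e A B : ℕ) (hA : 0 < A) (hB : 0 < B)
    (h : (k + 2) * 2 ^ e * A ≤ B) :
    2 * ((1:ℝ)/B) / ((1:ℝ)/A) ≤ (4/((k:ℝ)+2)) * (1/2) ^ (e+1) := by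
  have hA' : (0:ℝ) < A := by exact_mod_cast hA
  have hB' : (0:ℝ) < B := by exact_mod_cast hB
  have hL : 2 * ((1:ℝ)/B) / ((1:ℝ)/A) = 2 * A / B := by field_simp
  have hC : (0:ℝ) < ((k:ℝ)+2) * 2 ^ (e+1) := by positivity
  have hR : (4/((k:ℝ)+2)) * (1/2:ℝ) ^ (e+1) = 4 / (((k:ℝ)+2) * 2 ^ (e+1)) := by
    rw [div_pow, one_pow, div_mul_div_comm, mul_one]
  rw [hL, hR, div_le_div_iff₀ hB' hC]
  have h' : ((k:ℝ)+2) * 2 ^ e * A ≤ B := by exact_mod_cast h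
  rw [pow_succ]
  nlinarith [h']

-- geometric sum bound
lemma geo_sum (F : Finset ℕ) (e : ℕ → ℕ) (he : Set.InjOn e F) :
    ∑ j ∈ F, ((1:ℝ)/2) ^ (e j + 1) ≤ 1 := by
  have himg : ∑ j ∈ F, ((1:ℝ)/2) ^ (e j + 1) = ∑ i ∈ F.image e, ((1:ℝ)/2) ^ (i + 1) :=
    (Finset.sum_image (f := fun i => ((1:ℝ)/2) ^ (i + 1)) (fun x hx y hy h => he hx hy h)).symm
  rw [himg]
  set G := F.image e
  have hsub : G ⊆ Finset.range (G.sup id + 1) := by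
    intro i hi
    simp only [Finset.mem_range]
    exact Nat.lt_succ_of_le (Finset.le_sup (f := id) hi)
  calc ∑ i ∈ G, ((1:ℝ)/2) ^ (i + 1)
      ≤ ∑ i ∈ Finset.range (G.sup id + 1), ((1:ℝ)/2) ^ (i + 1) := by
        apply Finset.sum_le_sum_of_subset_of_nonneg hsub
        intro i _ _; positivity
    _ = (∑ i ∈ Finset.range (G.sup id + 1), ((1:ℝ)/2) ^ i) * (1/2) := by
        rw [Finset.sum_mul]
        exact Finset.sum_congr rfl (fun i _ => pow_succ _ _)
    _ ≤ 2 * (1/2) := by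
        apply mul_le_mul_of_nonneg_right (sum_geometric_two_le _) (by norm_num)
    _ = 1 := by norm_num

lemma two_sided_sum (k : ℕ) (F : Finset ℕ) (hk : k ∉ F) :
    ∑ j ∈ F, ((1:ℝ)/2) ^ ((j - k) + (k - j)) ≤ 2 := by
  classical
  rw [← Finset.sum_filter_add_sum_filter_not F (· < k)]
  have h1 : ∑ j ∈ F.filter (· < k), ((1:ℝ)/2) ^ ((j - k) + (k - j)) ≤ 1 := by
    have : ∀ j ∈ F.filter (· < k), ((1:ℝ)/2) ^ ((j - k) + (k - j))
        = ((1:ℝ)/2) ^ ((k - j - 1) + 1) := by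
      intro j hj
      simp only [Finset.mem_filter] at hj
      congr 1
      omega
    rw [Finset.sum_congr rfl this]
    apply geo_sum
    intro x hx y hy hxy
    simp only [Finset.coe_filter, Set.mem_setOf_eq] at hx hy
    have hxy' : k - x - 1 = k - y - 1 := hxy
    omega
  have h2 : ∑ j ∈ F.filter (¬ · < k), ((1:ℝ)/2) ^ ((j - k) + (k - j)) ≤ 1 := by
    have : ∀ j ∈ F.filter (¬ · < k), ((1:ℝ)/2) ^ ((j - k) + (k - j))
        = ((1:ℝ)/2) ^ ((j - k - 1) + 1) := by
      intro j hj
      simp only [Finset.mem_filter] at hj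
      have : j ≠ k := fun h => hk (h ▸ hj.1)
      congr 1
      omega
    rw [Finset.sum_congr rfl this]
    apply geo_sum
    intro x hx y hy hxy
    simp only [Finset.coe_filter, Set.mem_setOf_eq] at hx hy
    have hx' : x ≠ k := fun h => hk (h ▸ hx.1)
    have hy' : y ≠ k := fun h => hk (h ▸ hy.1)
    have hxy' : x - k - 1 = y - k - 1 := hxy
    omega
  linarith

-- Weierstrass product bound
lemma prod_lower {ι : Type*} (F : Finset ι) (f g : ι → ℝ) (h0 : ∀ j ∈ F, 0 ≤ f j)
    (h1 : ∀ j ∈ F, f j ≤ 1) (hfg : ∀ j ∈ F, 1 - f j ≤ g j) :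
    1 - ∑ j ∈ F, g j ≤ ∏ j ∈ F, f j := by
  classical
  induction F using Finset.induction_on with
  | empty => simp
  | insert a s ha ih =>
      rw [Finset.prod_insert ha, Finset.sum_insert ha]
      have hP : 1 - ∑ j ∈ s, g j ≤ ∏ j ∈ s, f j :=
        ih (fun j hj => h0 j (Finset.mem_insert_of_mem hj))
          (fun j hj => h1 j (Finset.mem_insert_of_mem hj))
          (fun j hj => hfg j (Finset.mem_insert_of_mem hj))
      have hP0 : 0 ≤ ∏ j ∈ s, f j :=
        Finset.prod_nonneg (fun j hj => h0 j (Finset.mem_insert_of_mem hj))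
      have hS0 : 0 ≤ ∑ j ∈ s, g j :=
        Finset.sum_nonneg (fun j hj => by
          have := hfg j (Finset.mem_insert_of_mem hj)
          have := h1 j (Finset.mem_insert_of_mem hj)
          linarith)
      have hfa0 : 0 ≤ f a := h0 a (Finset.mem_insert_self a s)
      have hfa1 : f a ≤ 1 := h1 a (Finset.mem_insert_self a s)
      have hga : 1 - f a ≤ g a := hfg a (Finset.mem_insert_self a s)
      nlinarith [mul_le_mul_of_nonneg_left hP hfa0]

-- tprod bounds
lemma my_tprod_ge {ι : Type*} (f : ι → ℝ) (c : ℝ) (hc : c ≤ 1)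
    (hF : ∀ F : Finset ι, c ≤ ∏ j ∈ F, f j) : c ≤ ∏' j, f j := by
  by_cases h : Multipliable f
  · exact ge_of_tendsto' h.hasProd hF
  · rw [tprod_eq_one_of_not_multipliable h]; exact hc

lemma my_tprod_le_one {ι : Type*} (f : ι → ℝ) (h0 : ∀ j, 0 ≤ f j) (h1 : ∀ j, f j ≤ 1) :
    ∏' j, f j ≤ 1 := by
  by_cases h : Multipliable f
  · exact le_of_tendsto' h.hasProd (fun F => Finset.prod_le_one (fun j _ => h0 j) (fun j _ => h1 j))
  · rw [tprod_eq_one_of_not_multipliable h]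

lemma abs_z_le_one (z : ℕ → ℂ) (hz : ∀ n, ‖z n‖ = 1 - 1 / (Nat.factorial (n + 2) : ℝ))
    (n : ℕ) : ‖z n‖ ≤ 1 := by
  rw [hz n]
  have : (0:ℝ) < (Nat.factorial (n+2) : ℝ) := by exact_mod_cast Nat.factorial_pos _
  have : (0:ℝ) ≤ 1 / (Nat.factorial (n+2) : ℝ) := by positivity
  linarith

lemma pair_bound (z : ℕ → ℂ)
    (hz : ∀ n, ‖z n‖ = 1 - 1 / (Nat.factorial (n + 2) : ℝ))
    (k j : ℕ) (hjk : j ≠ k) :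
    1 - (4/((k:ℝ)+2)) * ((1:ℝ)/2) ^ ((j - k) + (k - j)) ≤ pd (z k) (z j) := by
  have hfk : 0 < Nat.factorial (k+2) := Nat.factorial_pos _
  have hfj : 0 < Nat.factorial (j+2) := Nat.factorial_pos _
  have hfk' : (0:ℝ) < (Nat.factorial (k+2) : ℝ) := by exact_mod_cast hfk
  have hfj' : (0:ℝ) < (Nat.factorial (j+2) : ℝ) := by exact_mod_cast hfj
  have hak : (0:ℝ) < 1 / (Nat.factorial (k+2) : ℝ) := by positivity
  have haj : (0:ℝ) < 1 / (Nat.factorial (j+2) : ℝ) := by positivity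
  rcases lt_or_gt_of_ne hjk with h | h
  · -- j < k
    have hmono : Nat.factorial (j+2) ≤ Nat.factorial (k+2) :=
      Nat.factorial_le (by omega)
    have hba : 1 / (Nat.factorial (k+2) : ℝ) ≤ 1 / (Nat.factorial (j+2) : ℝ) := by
      apply one_div_le_one_div_of_le hfj'
      exact_mod_cast hmono
    have ha1 : 1 / (Nat.factorial (j+2) : ℝ) ≤ 1 := by
      rw [div_le_one hfj']
      exact_mod_cast Nat.one_le_iff_ne_zero.2 (Nat.factorial_ne_zero _)
    have hlow := pd_lower haj ha1 hak hba (hz j) (hz k)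
    rw [pd_symm]
    have hnat : (k + 2) * 2 ^ (k - j - 1) * Nat.factorial (j+2) ≤ Nat.factorial (k+2) := by
      have := fact_aux j (k - j - 1)
      rwa [show j + (k - j - 1) + 3 = k + 2 from by omega] at this
    have hrb := real_bound k (k - j - 1) (Nat.factorial (j+2)) (Nat.factorial (k+2))
      hfj hfk hnat
    rw [show (j - k) + (k - j) = (k - j - 1) + 1 from by omega]
    linarith
  · -- j > k
    have hmono : Nat.factorial (k+2) ≤ Nat.factorial (j+2) :=
      Nat.factorial_le (by omega)
    have hba : 1 / (Nat.factorial (j+2) : ℝ) ≤ 1 / (Nat.factorial (k+2) : ℝ) := by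
      apply one_div_le_one_div_of_le hfk'
      exact_mod_cast hmono
    have ha1 : 1 / (Nat.factorial (k+2) : ℝ) ≤ 1 := by
      rw [div_le_one hfk']
      exact_mod_cast Nat.one_le_iff_ne_zero.2 (Nat.factorial_ne_zero _)
    have hlow := pd_lower hak ha1 haj hba (hz k) (hz j)
    have hnat : (k + 2) * 2 ^ (j - k - 1) * Nat.factorial (k+2) ≤ Nat.factorial (j+2) := by
      have h1 := fact_aux k (j - k - 1)
      rw [show k + (j - k - 1) + 3 = j + 2 from by omega] at h1
      calc (k + 2) * 2 ^ (j - k - 1) * Nat.factorial (k+2)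
          ≤ (j + 2) * 2 ^ (j - k - 1) * Nat.factorial (k+2) := by
            apply Nat.mul_le_mul_right
            apply Nat.mul_le_mul_right
            omega
        _ ≤ Nat.factorial (j+2) := h1
    have hrb := real_bound k (j - k - 1) (Nat.factorial (k+2)) (Nat.factorial (j+2))
      hfk hfj hnat
    rw [show (j - k) + (k - j) = (j - k - 1) + 1 from by omega]
    linarith

/-- Any sequence `{z_n}_{n ≥ 2}` with `|z_n| = 1 - 1/n!` is a thin Blaschke sequence
(here `z : ℕ → ℂ` encodes the sequence via `z n = z_{n+2}`). -/
theorem stmt2 (z : ℕ → ℂ)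
    (hz : ∀ n, ‖z n‖ = 1 - 1 / (Nat.factorial (n + 2) : ℝ)) :
    Tendsto (fun k => ∏' j : {j : ℕ // j ≠ k}, pd (z k) (z (j : ℕ))) atTop (nhds 1) := by
  have hle1 := abs_z_le_one z hz
  apply tendsto_of_tendsto_of_tendsto_of_le_of_le
    (g := fun k : ℕ => 1 - 8/((k:ℝ)+2)) (h := fun _ : ℕ => (1:ℝ))
  · have h8 : Tendsto (fun k : ℕ => 8/((k:ℝ)+2)) atTop (nhds 0) :=
      Tendsto.div_atTop tendsto_const_nhds
        (tendsto_atTop_add_const_right _ 2 tendsto_natCast_atTop_atTop)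
    have := tendsto_const_nhds (x := (1:ℝ)) (f := atTop (α := ℕ)) |>.sub h8
    simpa using this
  · exact tendsto_const_nhds
  · intro k
    apply my_tprod_ge
    · have : (0:ℝ) ≤ 8/((k:ℝ)+2) := by positivity
      linarith
    · intro F
      have hstep := prod_lower F (fun j => pd (z k) (z (j : ℕ)))
        (fun j => (4/((k:ℝ)+2)) * ((1:ℝ)/2) ^ (((j:ℕ) - k) + (k - (j:ℕ))))
        (fun j _ => pd_nonneg _ _)
        (fun j _ => pd_le_one (hle1 k) (hle1 (j : ℕ)))
        (fun j _ => by have := pair_bound z hz k (j : ℕ) j.2; linarith)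
      have hsum : ∑ j ∈ F, (4/((k:ℝ)+2)) * ((1:ℝ)/2) ^ (((j:ℕ) - k) + (k - (j:ℕ)))
          ≤ 8/((k:ℝ)+2) := by
        have hinj : ∀ x ∈ F, ∀ y ∈ F, (x : ℕ) = (y : ℕ) → x = y :=
          fun x _ y _ h => Subtype.ext h
        have himg : ∑ j ∈ F, ((1:ℝ)/2) ^ (((j:ℕ) - k) + (k - (j:ℕ)))
            = ∑ i ∈ F.image (Subtype.val), ((1:ℝ)/2) ^ ((i - k) + (k - i)) :=
          (Finset.sum_image (f := fun i => ((1:ℝ)/2) ^ ((i - k) + (k - i))) hinj).symm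
        have hknm : k ∉ F.image (Subtype.val) := by
          simp only [Finset.mem_image]
          rintro ⟨x, _, hx⟩
          exact x.2 hx
        have h2 := two_sided_sum k (F.image (Subtype.val)) hknm
        rw [← Finset.mul_sum, ← himg] at *
        have hc : (0:ℝ) ≤ 4/((k:ℝ)+2) := by positivity
        calc (4/((k:ℝ)+2)) * ∑ j ∈ F, ((1:ℝ)/2) ^ (((j:ℕ) - k) + (k - (j:ℕ)))
            ≤ (4/((k:ℝ)+2)) * 2 := by
              apply mul_le_mul_of_nonneg_left _ hc
              rw [himg]; exact h2
          _ = 8/((k:ℝ)+2) := by ring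
      linarith
  · intro k
    exact my_tprod_le_one _ (fun j => pd_nonneg _ _)
      (fun j => pd_le_one (hle1 k) (hle1 (j : ℕ)))
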